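/- Let Γ be a signed graph with m edges and balanced clique number ω_b(Γ) ≥ 2, and suppose λ₁(Γ) ≥ |λ_n(Γ)| where λ₁ ≥ ⋯ ≥ λ_n are the adjacency eigenvalues. Then λ₁(Γ)² ≤ 2m·(ω_b(Γ)−1)/ω_b(Γ). -/

import Mathlib

open Matrix Polynomial

open Finset

/-- delta sum helper -/
lemma sum_delta_mul {n : ℕ} (u v : Fin n) (huv : u ≠ v) (f : Fin n → ℝ) :
    ∑ i, ((if i = u then (1:ℝ) else 0) - (if i = v then 1 else 0)) * f i = f u - f v := by
  simp [sub_mul, Finset.sum_sub_distrib, ite_mul, Finset.sum_ite_eq']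

/-- Motzkin–Straus style bound. -/
lemma MS {n : ℕ} (b : Fin n → Fin n → Prop) (hbsym : ∀ i j, b i j → b j i)
    (hirr : ∀ i, ¬ b i i) [DecidableRel b] (K : ℕ)
    (hclique : ∀ s : Finset (Fin n), (∀ u ∈ s, ∀ v ∈ s, u ≠ v → b u v) → s.card ≤ K) :
    ∀ N : ℕ, ∀ s : Finset (Fin n), s.card ≤ N → ∀ y : Fin n → ℝ,
      (∀ i, 0 ≤ y i) → (∀ i, y i ≠ 0 → i ∈ s) → (∑ i, y i) = 1 →
      (∑ i, ∑ j, (if b i j then y i * y j else 0)) ≤ 1 - 1/(K:ℝ) := by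
  classical
  intro N
  induction N with
  | zero =>
    intro s hs y hy0 hsupp hsum
    exfalso
    have hse : s = ∅ := Finset.card_eq_zero.mp (Nat.le_zero.mp hs)
    have : ∀ i, y i = 0 := by
      intro i
      by_contra h
      have := hsupp i h
      simp [hse] at this
    simp [this] at hsum
  | succ N ih =>
    intro s hs y hy0 hsupp hsum
    by_cases hcase : ∃ u, y u ≠ 0 ∧ ∃ v, y v ≠ 0 ∧ u ≠ v ∧ ¬ b u v
    · -- move weight between a non-b pair
      obtain ⟨u, hu, v, hv, huv, hbuv⟩ := hcase
      -- generic mover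
      have move : ∀ u v : Fin n, y u ≠ 0 → y v ≠ 0 → u ≠ v → ¬ b u v →
          (∑ j, (if b v j then y j else 0)) ≤ (∑ j, (if b u j then y j else 0)) →
          (∑ i, ∑ j, (if b i j then y i * y j else 0)) ≤ 1 - 1/(K:ℝ) := by
        intro u v hu hv huv hbuv hle
        set t := y v with ht
        set d : Fin n → ℝ := fun j => (if j = u then (1:ℝ) else 0) - (if j = v then 1 else 0) with hd
        set y' : Fin n → ℝ := fun j => y j + t * d j with hy'
        have hy'u : y' u = y u + y v := by simp [hy', hd, if_neg huv, ht]
        have hy'v : y' v = 0 := by simp [hy', hd, if_neg huv.symm, ht]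
        have hy'other : ∀ j, j ≠ u → j ≠ v → y' j = y j := by
          intro j h1 h2; simp [hy', hd, h1, h2]
        have hy'0 : ∀ i, 0 ≤ y' i := by
          intro i
          rcases eq_or_ne i u with rfl | h1
          · rw [hy'u]; exact add_nonneg (hy0 _) (hy0 _)
          rcases eq_or_ne i v with rfl | h2
          · rw [hy'v]
          · rw [hy'other i h1 h2]; exact hy0 i
        have hsupp' : ∀ i, y' i ≠ 0 → i ∈ s.erase v := by
          intro i hi
          rcases eq_or_ne i v with rfl | h2
          · exact absurd hy'v hi
          rcases eq_or_ne i u with rfl | h1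
          · exact Finset.mem_erase.mpr ⟨huv, hsupp _ hu⟩
          · rw [hy'other i h1 h2] at hi
            exact Finset.mem_erase.mpr ⟨h2, hsupp i hi⟩
        have hsum' : (∑ i, y' i) = 1 := by
          have : (∑ i, y' i) = (∑ i, y i) + t * (∑ i, d i) := by
            simp [hy', Finset.sum_add_distrib, Finset.mul_sum]
          have hdsum : (∑ i, d i) = 0 := by
            simp [hd, Finset.sum_sub_distrib, Finset.sum_ite_eq']
          rw [this, hdsum, mul_zero, add_zero, hsum]
        have hcard : (s.erase v).card ≤ N := by
          have hvs : v ∈ s := hsupp v hv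
          have := Finset.card_erase_of_mem hvs
          omega
        have hrec := ih (s.erase v) hcard y' hy'0 hsupp' hsum'
        refine le_trans ?_ hrec
        -- Q(y) ≤ Q(y')
        set c : Fin n → Fin n → ℝ := fun i j => if b i j then (1:ℝ) else 0 with hc
        have hcite : ∀ (w : Fin n → ℝ) i j, (if b i j then w i * w j else 0) = c i j * w i * w j := by
          intro w i j; by_cases h : b i j <;> simp [hc, h, mul_assoc]
        have hQ : ∀ w : Fin n → ℝ, (∑ i, ∑ j, (if b i j then w i * w j else 0))
            = ∑ i, ∑ j, c i j * w i * w j := by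
          intro w; exact Finset.sum_congr rfl fun i _ => Finset.sum_congr rfl fun j _ => hcite w i j
        rw [hQ, hQ]
        have expand : ∀ i j, c i j * y' i * y' j
            = c i j * y i * y j + t * (c i j * d i * y j) + t * (c i j * y i * d j)
              + t * t * (c i j * d i * d j) := by
          intro i j; simp only [hy']; ring
        have hsplit : (∑ i, ∑ j, c i j * y' i * y' j)
            = (∑ i, ∑ j, c i j * y i * y j)
              + t * (∑ i, ∑ j, c i j * d i * y j)
              + t * (∑ i, ∑ j, c i j * y i * d j)
              + t * t * (∑ i, ∑ j, c i j * d i * d j) := by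
          simp only [expand, Finset.sum_add_distrib, Finset.mul_sum]
        rw [hsplit]
        have hR : ∀ i, (∑ j, c i j * y j) = ∑ j, (if b i j then y j else 0) := by
          intro i; refine Finset.sum_congr rfl fun j _ => ?_
          by_cases h : b i j <;> simp [hc, h]
        have h1 : (∑ i, ∑ j, c i j * d i * y j)
            = (∑ j, c u j * y j) - (∑ j, c v j * y j) := by
          rw [Finset.sum_comm]
          have : ∀ j, (∑ i, c i j * d i * y j) = ((fun i => c i j * y j) u - (fun i => c i j * y j) v) := by
            intro j
            rw [← sum_delta_mul u v huv (fun i => c i j * y j)]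
            exact Finset.sum_congr rfl fun i _ => by ring
          simp only [this]
          rw [Finset.sum_sub_distrib]
        have csym : ∀ i j, c i j = c j i := by
          intro i j
          by_cases h : b i j
          · simp [hc, h, hbsym i j h]
          · have h' : ¬ b j i := fun hh => h (hbsym j i hh)
            simp [hc, h, h']
        have h2 : (∑ i, ∑ j, c i j * y i * d j)
            = (∑ j, c u j * y j) - (∑ j, c v j * y j) := by
          have hin : ∀ i, (∑ j, c i j * y i * d j) = c i u * y i - c i v * y i := by
            intro i
            rw [← sum_delta_mul u v huv (fun j => c i j * y i)]
            exact Finset.sum_congr rfl fun j _ => by ring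
          simp only [hin]
          rw [Finset.sum_sub_distrib]
          congr 1 <;> exact Finset.sum_congr rfl fun i _ => by rw [csym]
        have h3 : (∑ i, ∑ j, c i j * d i * d j) = 0 := by
          have hin : ∀ i, (∑ j, c i j * d i * d j) = c i u * d i - c i v * d i := by
            intro i
            rw [← sum_delta_mul u v huv (fun j => c i j * d i)]
            exact Finset.sum_congr rfl fun j _ => by ring
          have : (∑ i, ∑ j, c i j * d i * d j)
              = ∑ i, ((if i = u then (1:ℝ) else 0) - (if i = v then 1 else 0))
                  * (c i u - c i v) := by
            simp only [hin]
            refine Finset.sum_congr rfl fun i _ => ?_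
            simp only [hd]
            ring
          rw [this, sum_delta_mul u v huv (fun i => c i u - c i v)]
          have c1 : c u u = 0 := by simp [hc, hirr u]
          have c2 : c u v = 0 := by simp [hc, hbuv]
          have c3 : c v u = 0 := by rw [csym]; simp [hc, hbuv]
          have c4 : c v v = 0 := by simp [hc, hirr v]
          rw [c1, c2, c3, c4]; ring
        have hle' : (∑ j, c v j * y j) ≤ (∑ j, c u j * y j) := by
          simp only [hR]; exact hle
        have ht0 : 0 ≤ t := hy0 v
        rw [h1, h2, h3]
        nlinarith [mul_le_mul_of_nonneg_left hle' ht0]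
      rcases le_total (∑ j, (if b v j then y j else 0)) (∑ j, (if b u j then y j else 0)) with h | h
      · exact move u v hu hv huv hbuv h
      · exact move v u hv hu huv.symm (fun hh => hbuv (hbsym v u hh)) h
    · -- support is a b-clique
      push_neg at hcase
      set T : Finset (Fin n) := Finset.univ.filter (fun i => y i ≠ 0) with hT
      have hTclique : ∀ u ∈ T, ∀ v ∈ T, u ≠ v → b u v := by
        intro u hu v hv huv
        rw [hT, Finset.mem_filter] at hu hv
        exact hcase u hu.2 v hv.2 huv
      have hTK : T.card ≤ K := hclique T hTclique
      have hTpos : 0 < T.card := by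
        apply Finset.card_pos.mpr
        by_contra hemp
        rw [Finset.not_nonempty_iff_eq_empty] at hemp
        have hall : ∀ i, y i = 0 := by
          intro i; by_contra h
          have : i ∈ T := by rw [hT, Finset.mem_filter]; exact ⟨Finset.mem_univ i, h⟩
          simp [hemp] at this
        simp [hall] at hsum
      have step1 : (∑ i, ∑ j, (if b i j then y i * y j else 0))
          ≤ (∑ i, ∑ j, y i * y j) - (∑ i, y i ^ 2) := by
        have hterm : ∀ i, (∑ j, (if b i j then y i * y j else 0))
            ≤ (∑ j, y i * y j) - y i ^ 2 := by
          intro i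
          have e2 : (∑ j, y i * y j) - y i ^ 2
              = ∑ j, (y i * y j - (if j = i then y i * y j else 0)) := by
            rw [Finset.sum_sub_distrib]
            simp [sq]
          rw [e2]
          apply Finset.sum_le_sum
          intro j _
          rcases eq_or_ne j i with rfl | hji
          · have : ¬ b j j := hirr j
            simp [this]
          · have hnn : 0 ≤ y i * y j := mul_nonneg (hy0 i) (hy0 j)
            by_cases h : b i j <;> simp [h, hji, hnn]
        calc (∑ i, ∑ j, (if b i j then y i * y j else 0))
            ≤ ∑ i, ((∑ j, y i * y j) - y i ^ 2) := Finset.sum_le_sum (fun i _ => hterm i)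
          _ = (∑ i, ∑ j, y i * y j) - (∑ i, y i ^ 2) := Finset.sum_sub_distrib _ _
      have hsq : (∑ i, ∑ j, y i * y j) = 1 := by
        rw [← Finset.sum_mul_sum]
        rw [hsum]; norm_num
      -- lower bound on sum of squares
      have hTsum : (∑ i ∈ T, y i) = 1 := by
        rw [← hsum]
        apply Finset.sum_subset (Finset.subset_univ T)
        intro i _ hiT
        by_contra h
        exact hiT (by rw [hT, Finset.mem_filter]; exact ⟨Finset.mem_univ i, h⟩)
      have hCS : (1:ℝ) ≤ T.card * (∑ i, y i ^ 2) := by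
        have h1 : ((∑ i ∈ T, y i)) ^ 2 ≤ T.card * ∑ i ∈ T, y i ^ 2 :=
          sq_sum_le_card_mul_sum_sq
        have h2 : (∑ i ∈ T, y i ^ 2) ≤ ∑ i, y i ^ 2 :=
          Finset.sum_le_sum_of_subset_of_nonneg (Finset.subset_univ T)
            (fun i _ _ => sq_nonneg _)
        rw [hTsum] at h1
        norm_num at h1
        calc (1:ℝ) ≤ T.card * ∑ i ∈ T, y i ^ 2 := h1
          _ ≤ T.card * ∑ i, y i ^ 2 := by
              apply mul_le_mul_of_nonneg_left h2 (by positivity)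
      have hKpos : 0 < K := lt_of_lt_of_le hTpos hTK
      have hinv : 1/(K:ℝ) ≤ ∑ i, y i ^ 2 := by
        have hsq0 : (0:ℝ) ≤ ∑ i, y i ^ 2 := by positivity
        have hTK' : (T.card : ℝ) ≤ (K : ℝ) := by exact_mod_cast hTK
        have h4 : (1:ℝ) ≤ K * (∑ i, y i ^ 2) :=
          le_trans hCS (mul_le_mul_of_nonneg_right hTK' hsq0)
        rw [div_le_iff₀ (by exact_mod_cast hKpos)]
        linarith
      calc (∑ i, ∑ j, (if b i j then y i * y j else 0))
          ≤ (∑ i, ∑ j, y i * y j) - (∑ i, y i ^ 2) := step1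
        _ = 1 - (∑ i, y i ^ 2) := by rw [hsq]
        _ ≤ 1 - 1/(K:ℝ) := by linarith

open Matrix Polynomial

lemma eval_charpoly_aux {n : ℕ} (A : Matrix (Fin n) (Fin n) ℝ) (t : ℝ) :
    A.charpoly.eval t = (t • (1 : Matrix (Fin n) (Fin n) ℝ) - A).det := by
  have h1 : A.charpoly.eval t = ((charmatrix A).map (Polynomial.evalRingHom t)).det := by
    rw [Matrix.charpoly]
    exact RingHom.map_det (Polynomial.evalRingHom t) (charmatrix A)
  rw [h1]
  congr 1
  ext i j
  by_cases h : i = j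
  · subst h
    simp [charmatrix_apply_eq, Matrix.map_apply, Matrix.one_apply]
  · simp [charmatrix_apply_ne _ _ _ h, Matrix.map_apply, Matrix.one_apply_ne h]

/-- If λ₁(Γ) ≥ |λₙ(Γ)|, then λ₁(Γ)² ≤ 2m(ω_b − 1)/ω_b, where ω_b is the
balanced clique number of the signed graph Γ. -/
theorem stmt_3 {n : ℕ} (hn : 0 < n) (G : SimpleGraph (Fin n)) [DecidableRel G.Adj]
    (σ : Fin n → Fin n → ℝ)
    (hσ : ∀ i j, G.Adj i j → σ i j = 1 ∨ σ i j = -1)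
    (hsym : ∀ i j, σ i j = σ j i)
    (A : Matrix (Fin n) (Fin n) ℝ)
    (hA : A = fun i j => if G.Adj i j then σ i j else 0)
    (μ : Fin n → ℝ) (hmono : Antitone μ)
    (hchar : A.charpoly = ∏ i, (X - C (μ i)))
    (ωb : ℕ) (hωb2 : 2 ≤ ωb)
    (hωb : IsGreatest {k : ℕ | ∃ s : Finset (Fin n), s.card = k ∧
      (∀ u ∈ s, ∀ v ∈ s, u ≠ v → G.Adj u v) ∧
      ∃ θ : Fin n → ℝ, (∀ w, θ w = 1 ∨ θ w = -1) ∧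
        ∀ u ∈ s, ∀ v ∈ s, G.Adj u v → σ u v = θ u * θ v} ωb)
    (hlam : |μ ⟨n - 1, Nat.sub_lt hn one_pos⟩| ≤ μ ⟨0, hn⟩) :
    (μ ⟨0, hn⟩) ^ 2 ≤ 2 * (G.edgeFinset.card : ℝ) * ((ωb : ℝ) - 1) / ωb := by
  classical
  set lam := μ ⟨0, hn⟩ with hlamdef
  have hlam0 : 0 ≤ lam := le_trans (abs_nonneg _) hlam
  -- an eigenvector for lam
  have hdet : (lam • (1 : Matrix (Fin n) (Fin n) ℝ) - A).det = 0 := by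
    rw [← eval_charpoly_aux, hchar, Polynomial.eval_prod]
    exact Finset.prod_eq_zero (Finset.mem_univ (⟨0, hn⟩ : Fin n)) (by simp [hlamdef])
  obtain ⟨v, hv0, hveq⟩ := Matrix.exists_mulVec_eq_zero_iff.mpr hdet
  have heig : ∀ i, (∑ j, A i j * v j) = lam * v i := by
    intro i
    rw [Matrix.sub_mulVec, sub_eq_zero] at hveq
    have := congrFun hveq.symm i
    rw [Matrix.smul_mulVec, Matrix.one_mulVec] at this
    simpa [Matrix.mulVec, dotProduct] using this
  have hvsq : 0 < ∑ i, v i ^ 2 := by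
    obtain ⟨i, hi⟩ := Function.ne_iff.mp hv0
    exact Finset.sum_pos' (fun j _ => sq_nonneg _) ⟨i, Finset.mem_univ i, lt_of_le_of_ne (sq_nonneg _) (Ne.symm (pow_ne_zero 2 hi))⟩
  set c : ℝ := (Real.sqrt (∑ i, v i ^ 2))⁻¹ with hc
  have hcpos : 0 < c := by
    rw [hc]; exact inv_pos.mpr (Real.sqrt_pos.mpr hvsq)
  set x : Fin n → ℝ := fun i => c * v i with hx
  have hxsq : (∑ i, x i ^ 2) = 1 := by
    have : (∑ i, x i ^ 2) = c ^ 2 * ∑ i, v i ^ 2 := by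
      rw [Finset.mul_sum]
      exact Finset.sum_congr rfl fun i _ => by rw [hx]; ring
    rw [this, hc]
    rw [← Real.sqrt_inv, Real.sq_sqrt (by positivity)]
    field_simp
  have hxeig : ∀ i, (∑ j, A i j * x j) = lam * x i := by
    intro i
    have : (∑ j, A i j * x j) = c * ∑ j, A i j * v j := by
      rw [Finset.mul_sum]
      exact Finset.sum_congr rfl fun j _ => by rw [hx]; ring
    rw [this, heig i, hx]; ring
  have hlam_eq : lam = ∑ i, ∑ j, A i j * x i * x j := by
    have h1 : ∀ i, (∑ j, A i j * x i * x j) = x i * ∑ j, A i j * x j := by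
      intro i; rw [Finset.mul_sum]; exact Finset.sum_congr rfl fun j _ => by ring
    calc lam = lam * ∑ i, x i ^ 2 := by rw [hxsq]; ring
      _ = ∑ i, x i * (lam * x i) := by rw [Finset.mul_sum]; exact Finset.sum_congr rfl fun i _ => by ring
      _ = ∑ i, ∑ j, A i j * x i * x j := by
          refine Finset.sum_congr rfl fun i _ => ?_
          rw [h1 i, hxeig i]
  -- switching signs
  set ε : Fin n → ℝ := fun i => if x i < 0 then -1 else 1 with hεdef
  set z : Fin n → ℝ := fun i => |x i| with hzdef
  have hε1 : ∀ i, ε i = 1 ∨ ε i = -1 := by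
    intro i; rw [hεdef]; by_cases h : x i < 0 <;> simp [h]
  have hεz : ∀ i, x i = ε i * z i := by
    intro i
    rw [hεdef, hzdef]
    by_cases h : x i < 0
    · simp [h, abs_of_neg h]
    · push_neg at h
      simp [not_lt.mpr h, abs_of_nonneg h]
  have hz0 : ∀ i, 0 ≤ z i := fun i => abs_nonneg _
  have hzsq : ∀ i, z i ^ 2 = x i ^ 2 := fun i => sq_abs _
  -- the positive switched subgraph
  set b : Fin n → Fin n → Prop := fun i j => G.Adj i j ∧ σ i j * (ε i * ε j) = 1 with hbdef
  haveI : DecidableRel b := fun i j => Classical.propDecidable _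
  have hbsym : ∀ i j, b i j → b j i := by
    rintro i j ⟨hadj, hs⟩
    exact ⟨hadj.symm, by rw [← hsym i j]; linarith [hs]⟩
  have hbirr : ∀ i, ¬ b i i := fun i h => G.irrefl h.1
  have hbclique : ∀ s : Finset (Fin n),
      (∀ u ∈ s, ∀ v ∈ s, u ≠ v → b u v) → s.card ≤ ωb := by
    intro s hcl
    apply hωb.2
    refine ⟨s, rfl, fun u hu v hv huv => (hcl u hu v hv huv).1, ε, hε1, ?_⟩
    intro u hu v hv hadj
    have huv : u ≠ v := fun h => G.irrefl (h ▸ hadj)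
    have hb := (hcl u hu v hv huv).2
    have hεε : (ε u * ε v) * (ε u * ε v) = 1 := by
      rcases hε1 u with h1 | h1 <;> rcases hε1 v with h2 | h2 <;> rw [h1, h2] <;> norm_num
    calc σ u v = σ u v * ((ε u * ε v) * (ε u * ε v)) := by rw [hεε]; ring
      _ = (σ u v * (ε u * ε v)) * (ε u * ε v) := by ring
      _ = ε u * ε v := by rw [hb]; ring
  -- τ is ±1 on edges
  have hτ : ∀ i j, G.Adj i j → ¬ b i j → σ i j * (ε i * ε j) = -1 := by
    intro i j hadj hnb
    have h1 : σ i j * (ε i * ε j) ≠ 1 := fun h => hnb ⟨hadj, h⟩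
    rcases hσ i j hadj with h | h <;> rcases hε1 i with hi | hi <;>
      rcases hε1 j with hj | hj <;> rw [h, hi, hj] <;> rw [h, hi, hj] at h1 <;> revert h1 <;> norm_num
  -- lam ≤ S
  set S : ℝ := ∑ i, ∑ j, (if b i j then z i * z j else 0) with hSdef
  have hlamS : lam ≤ S := by
    rw [hlam_eq, hSdef]
    refine Finset.sum_le_sum fun i _ => Finset.sum_le_sum fun j _ => ?_
    by_cases hadj : G.Adj i j
    · have hAij : A i j = σ i j := by rw [hA]; simp [hadj]
      by_cases hb : b i j
      · have : A i j * x i * x j = (σ i j * (ε i * ε j)) * (z i * z j) := by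
          rw [hAij, hεz i, hεz j]; ring
        rw [this, hb.2, if_pos hb, one_mul]
      · have : A i j * x i * x j = (σ i j * (ε i * ε j)) * (z i * z j) := by
          rw [hAij, hεz i, hεz j]; ring
        rw [this, hτ i j hadj hb, if_neg hb]
        have := mul_nonneg (hz0 i) (hz0 j)
        linarith
    · have hAij : A i j = 0 := by rw [hA]; simp [hadj]
      rw [hAij, if_neg (fun h => hadj h.1)]
      simp
  have hS0 : 0 ≤ S := le_trans hlam0 hlamS
  -- Cauchy-Schwarz
  set Cnt : ℝ := ∑ i, ∑ j, (if b i j then (1:ℝ) else 0) with hCntdef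
  set Q : ℝ := ∑ i, ∑ j, (if b i j then x i ^ 2 * x j ^ 2 else 0) with hQdef
  have hCS : S ^ 2 ≤ Cnt * Q := by
    have h1 : S = ∑ p ∈ Finset.univ ×ˢ Finset.univ,
        (if b p.1 p.2 then (1:ℝ) else 0) * (if b p.1 p.2 then z p.1 * z p.2 else 0) := by
      rw [hSdef, Finset.sum_product]
      refine Finset.sum_congr rfl fun i _ => Finset.sum_congr rfl fun j _ => ?_
      by_cases h : b i j
      · simp only [if_pos h, one_mul]
      · simp only [if_neg h, zero_mul, mul_zero]
    have h2 := Finset.sum_mul_sq_le_sq_mul_sq (Finset.univ ×ˢ Finset.univ)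
      (fun p => if b p.1 p.2 then (1:ℝ) else 0)
      (fun p => if b p.1 p.2 then z p.1 * z p.2 else 0)
    rw [← h1] at h2
    refine le_trans h2 (le_of_eq ?_)
    congr 1
    · rw [hCntdef, Finset.sum_product]
      refine Finset.sum_congr rfl fun i _ => Finset.sum_congr rfl fun j _ => ?_
      by_cases h : b i j
      · simp only [if_pos h, one_pow]
      · simp only [if_neg h]; norm_num
    · rw [hQdef, Finset.sum_product]
      refine Finset.sum_congr rfl fun i _ => Finset.sum_congr rfl fun j _ => ?_
      by_cases h : b i j
      · simp only [if_pos h]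
        rw [← hzsq i, ← hzsq j]
        ring
      · simp only [if_neg h]; norm_num
  -- Cnt ≤ 2m
  have hCnt2m : Cnt ≤ 2 * (G.edgeFinset.card : ℝ) := by
    have h1 : Cnt ≤ ∑ i, ∑ j, (if G.Adj i j then (1:ℝ) else 0) := by
      rw [hCntdef]
      refine Finset.sum_le_sum fun i _ => Finset.sum_le_sum fun j _ => ?_
      by_cases h : b i j
      · simp only [if_pos h, if_pos h.1]; exact le_refl 1
      · by_cases h2 : G.Adj i j
        · simp only [if_neg h, if_pos h2]; norm_num
        · simp only [if_neg h, if_neg h2]; exact le_refl 0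
    have h2 : (∑ i, ∑ j, (if G.Adj i j then (1:ℝ) else 0)) = 2 * (G.edgeFinset.card : ℝ) := by
      have h3 : ∀ i, (∑ j, (if G.Adj i j then (1:ℝ) else 0)) = (G.degree i : ℝ) := by
        intro i
        rw [Finset.sum_boole]
        congr 1
        rw [SimpleGraph.degree, SimpleGraph.neighborFinset_eq_filter]
      simp only [h3]
      rw [← Nat.cast_sum]
      rw [SimpleGraph.sum_degrees_eq_twice_card_edges]
      push_cast; ring
    linarith
  -- Motzkin-Straus
  have hQms : Q ≤ 1 - 1/(ωb:ℝ) := by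
    rw [hQdef]
    exact MS b hbsym hbirr ωb hbclique n Finset.univ (le_of_eq (Finset.card_fin n))
      (fun i => x i ^ 2) (fun i => sq_nonneg _) (fun i _ => Finset.mem_univ i) hxsq
  have hQ0 : 0 ≤ Q := by
    rw [hQdef]
    refine Finset.sum_nonneg fun i _ => Finset.sum_nonneg fun j _ => ?_
    by_cases h : b i j
    · rw [if_pos h]; positivity
    · rw [if_neg h]
  -- combine
  have hfinal : lam ^ 2 ≤ 2 * (G.edgeFinset.card : ℝ) * (1 - 1/(ωb:ℝ)) := by
    calc lam ^ 2 ≤ S ^ 2 := by nlinarith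
      _ ≤ Cnt * Q := hCS
      _ ≤ 2 * (G.edgeFinset.card : ℝ) * (1 - 1/(ωb:ℝ)) := by
          apply mul_le_mul hCnt2m hQms hQ0
          exact mul_nonneg (by norm_num) (Nat.cast_nonneg _)
  have hωbpos : (0:ℝ) < ωb := by
    have : (0:ℕ) < ωb := by omega
    exact_mod_cast this
  have heq : 2 * (G.edgeFinset.card : ℝ) * ((ωb : ℝ) - 1) / ωb
      = 2 * (G.edgeFinset.card : ℝ) * (1 - 1/(ωb:ℝ)) := by
    rw [mul_div_assoc, sub_div, div_self hωbpos.ne']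
  rw [heq]
  exact hfinal
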